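/- Let $\Phi:[n]^m \to \mathbb{R}_{\geq 0}$ be a function that is invariant under permutations of its $m$ arguments, and suppose $|\Phi(J)-\Phi(J')| \leq c$ whenever the multisets $J, J' \in [n]^m$ differ in exactly one element. If $J=(J_1,\dots,J_m)$ is a sequence of $m$ indices sampled uniformly at random from $[n]$ without replacement, then for all $\epsilon > 0$, $\Pr[\Phi(J) - \mathbb{E}[\Phi(J)] > \epsilon] \leq \exp(-2\epsilon^2/(m c^2))$. -/

import Mathlib

noncomputable section McDiarmidAux
open Real Finset Classical


noncomputable def mcD (θ h : ℝ) : ℝ := 1 - θ + θ * Real.exp h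
noncomputable def mcL (θ h : ℝ) : ℝ := Real.log (mcD θ h) - θ * h
noncomputable def mcd (θ h : ℝ) : ℝ := θ * Real.exp h / mcD θ h - θ

lemma mcD_pos {θ : ℝ} (h0 : 0 ≤ θ) (h1 : θ ≤ 1) (h : ℝ) : 0 < mcD θ h := by
  unfold mcD
  rcases lt_or_eq_of_le h1 with h1' | rfl
  · nlinarith [Real.exp_pos h, mul_nonneg h0 (Real.exp_pos h).le]
  · simp [Real.exp_pos h]

lemma mcL_hasDeriv {θ : ℝ} (h0 : 0 ≤ θ) (h1 : θ ≤ 1) (h : ℝ) :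
    HasDerivAt (mcL θ) (mcd θ h) h := by
  have hD : HasDerivAt (mcD θ) (θ * Real.exp h) h := by
    exact (((Real.hasDerivAt_exp h).const_mul θ).const_add (1 - θ))
  have hlog : HasDerivAt (fun x => Real.log (mcD θ x)) (θ * Real.exp h / mcD θ h) h :=
    hD.log (mcD_pos h0 h1 h).ne'
  have hmul : HasDerivAt (fun x => θ * x) θ h := by
    simpa using (hasDerivAt_id h).const_mul θ
  exact hlog.sub hmul

lemma mcd_hasDeriv {θ : ℝ} (h0 : 0 ≤ θ) (h1 : θ ≤ 1) (h : ℝ) :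
    HasDerivAt (mcd θ) (θ * (1 - θ) * Real.exp h / (mcD θ h) ^ 2) h := by
  have hD : HasDerivAt (mcD θ) (θ * Real.exp h) h := by
    exact (((Real.hasDerivAt_exp h).const_mul θ).const_add (1 - θ))
  have hnum : HasDerivAt (fun x => θ * Real.exp x) (θ * Real.exp h) h :=
    (Real.hasDerivAt_exp h).const_mul θ
  have hq := hnum.div hD (mcD_pos h0 h1 h).ne'
  have heq : (θ * Real.exp h * mcD θ h - θ * Real.exp h * (θ * Real.exp h)) / (mcD θ h) ^ 2
      = θ * (1 - θ) * Real.exp h / (mcD θ h) ^ 2 := by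
    have : mcD θ h = 1 - θ + θ * Real.exp h := rfl
    rw [this]; ring
  refine (hq.sub_const θ).congr_deriv ?_
  unfold mcD; ring

lemma mcd_deriv_bound {θ : ℝ} (h0 : 0 ≤ θ) (h1 : θ ≤ 1) (h : ℝ) :
    |θ * (1 - θ) * Real.exp h / (mcD θ h) ^ 2| ≤ 1 / 4 := by
  have hDpos := mcD_pos h0 h1 h
  have hnn : 0 ≤ θ * (1 - θ) * Real.exp h / (mcD θ h) ^ 2 := by
    apply div_nonneg _ (sq_nonneg _)
    exact mul_nonneg (mul_nonneg h0 (by linarith)) (Real.exp_pos h).le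
  rw [abs_of_nonneg hnn, div_le_div_iff₀ (by positivity) (by norm_num)]
  have hDval : mcD θ h = (1 - θ) + θ * Real.exp h := rfl
  nlinarith [sq_nonneg ((1 - θ) - θ * Real.exp h)]

lemma mcd_bound {θ : ℝ} (h0 : 0 ≤ θ) (h1 : θ ≤ 1) (h : ℝ) : |mcd θ h| ≤ |h| / 4 := by
  have := Convex.norm_image_sub_le_of_norm_hasDerivWithin_le
    (f := mcd θ) (f' := fun x => θ * (1 - θ) * Real.exp x / (mcD θ x) ^ 2)
    (s := Set.univ) (C := 1/4)
    (fun x _ => (mcd_hasDeriv h0 h1 x).hasDerivWithinAt)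
    (fun x _ => by rw [Real.norm_eq_abs]; exact mcd_deriv_bound h0 h1 x)
    convex_univ (Set.mem_univ 0) (Set.mem_univ h)
  have hd0 : mcd θ 0 = 0 := by simp [mcd, mcD]
  rw [hd0, sub_zero, Real.norm_eq_abs, Real.norm_eq_abs, sub_zero] at this
  linarith
  
lemma mcL_le (θ : ℝ) (h0 : 0 ≤ θ) (h1 : θ ≤ 1) (h : ℝ) : mcL θ h ≤ h ^ 2 / 8 := by
  set G : ℝ → ℝ := fun x => x ^ 2 / 8 - mcL θ x with hG
  have hGderiv : ∀ x, HasDerivAt G (x / 4 - mcd θ x) x := by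
    intro x
    have h1' : HasDerivAt (fun y : ℝ => y ^ 2 / 8) (x / 4) x := by
      have := (hasDerivAt_pow 2 x).div_const 8
      simpa [hG] using this.congr_deriv (by ring)
    exact h1'.sub (mcL_hasDeriv h0 h1 x)
  have hG0 : G 0 = 0 := by simp [hG, mcL, mcD]
  have hcont : Continuous G := by
    have : Differentiable ℝ G := fun x => (hGderiv x).differentiableAt
    exact this.continuous
  have key : 0 ≤ G h := by
    rcases le_or_gt 0 h with hh | hh
    · have hmono : MonotoneOn G (Set.Ici 0) := by
        apply monotoneOn_of_deriv_nonneg (convex_Ici 0) hcont.continuousOn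
        · exact fun x _ => (hGderiv x).differentiableAt.differentiableWithinAt
        · intro x hx
          rw [(hGderiv x).deriv]
          have hx0 : 0 < x := by simpa using hx
          have := mcd_bound h0 h1 x
          rw [abs_of_pos hx0] at this
          have := abs_le.mp this
          linarith [this.2]
      have := hmono (Set.mem_Ici.mpr le_rfl) (Set.mem_Ici.mpr hh) hh
      simpa [hG0] using this
    · have hanti : AntitoneOn G (Set.Iic 0) := by
        apply antitoneOn_of_deriv_nonpos (convex_Iic 0) hcont.continuousOn
        · exact fun x _ => (hGderiv x).differentiableAt.differentiableWithinAt
        · intro x hx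
          rw [(hGderiv x).deriv]
          have hx0 : x < 0 := by simpa using hx
          have := mcd_bound h0 h1 x
          rw [abs_of_neg hx0] at this
          have := abs_le.mp this
          linarith [this.1]
      have := hanti (Set.mem_Iic.mpr hh.le) (Set.mem_Iic.mpr le_rfl) hh.le
      simpa [hG0] using this
  simpa [hG] using key

/-- core exponential inequality -/
lemma mcD_mul_exp_le {θ : ℝ} (h0 : 0 ≤ θ) (h1 : θ ≤ 1) (h : ℝ) :
    mcD θ h * Real.exp (-(θ * h)) ≤ Real.exp (h ^ 2 / 8) := by
  have hpos := mcD_pos h0 h1 h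
  have : mcD θ h * Real.exp (-(θ * h)) = Real.exp (mcL θ h) := by
    rw [mcL, Real.exp_sub, Real.exp_log hpos]
    rw [div_eq_mul_inv, ← Real.exp_neg]
  rw [this]
  exact Real.exp_le_exp.mpr (mcL_le θ h0 h1 h)


lemma finite_hoeffding {β : Type*} [Fintype β] [Nonempty β] (f : β → ℝ) (c t : ℝ)
    (hc : 0 ≤ c) (hf : ∀ a b, f a - f b ≤ c) :
    (∑ a, Real.exp (t * (f a - (∑ b, f b) / (Fintype.card β)))) / (Fintype.card β)
      ≤ Real.exp (t ^ 2 * c ^ 2 / 8) := by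
  classical
  set μ : ℝ := (∑ b, f b) / (Fintype.card β) with hμ
  have hcard : (0:ℝ) < (Fintype.card β : ℝ) := by
    exact_mod_cast Fintype.card_pos
  obtain ⟨aM, -, haM⟩ := Finset.exists_max_image (univ : Finset β) f univ_nonempty
  obtain ⟨am, -, ham⟩ := Finset.exists_min_image (univ : Finset β) f univ_nonempty
  set M := f aM with hM
  set P := f am with hP
  have hPM : ∀ a, P ≤ f a ∧ f a ≤ M := fun a => ⟨ham a (mem_univ a), haM a (mem_univ a)⟩
  have hμM : μ ≤ M := by
    rw [hμ, div_le_iff₀ hcard]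
    calc ∑ b, f b ≤ ∑ _b : β, M := Finset.sum_le_sum (fun b _ => (hPM b).2)
    _ = M * (Fintype.card β) := by rw [Finset.sum_const]; simp [mul_comm]
  have hPμ : P ≤ μ := by
    rw [hμ, le_div_iff₀ hcard]
    calc P * (Fintype.card β) = ∑ _b : β, P := by rw [Finset.sum_const]; simp [mul_comm]
    _ ≤ ∑ b, f b := Finset.sum_le_sum (fun b _ => (hPM b).1)
  set p := P - μ with hp
  set q := M - μ with hq
  have hp0 : p ≤ 0 := by simp [hp]; linarith
  have hq0 : 0 ≤ q := by simp [hq]; linarith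
  have hqpc : q - p ≤ c := by
    have := hf aM am
    simp only [hp, hq, ← hM, ← hP]; linarith
  have hsum0 : ∑ a, (f a - μ) = 0 := by
    rw [Finset.sum_sub_distrib, Finset.sum_const, hμ]
    rw [Finset.card_univ, nsmul_eq_mul]
    field_simp
    ring
  rcases eq_or_lt_of_le (le_trans hp0 hq0) with heq | hlt
  · -- p = q = 0, f constant equal to μ
    have hkey : ∀ a, f a = μ := by
      intro a
      have h1 := (hPM a).1
      have h2 := (hPM a).2
      have hp' : p = 0 := le_antisymm hp0 (heq ▸ hq0)
      have hq' : q = 0 := heq ▸ hp'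
      simp only [hp] at hp'
      simp only [hq] at hq'
      linarith
    have hexps : ∀ a, Real.exp (t * (f a - μ)) = 1 := fun a => by
      rw [hkey a]; simp
    simp only [hexps, Finset.sum_const, nsmul_eq_mul, mul_one]
    rw [Finset.card_univ, div_self hcard.ne']
    exact Real.one_le_exp (by positivity)
  · -- main case p < q
    set θ : ℝ := -p / (q - p) with hθ
    set h : ℝ := t * (q - p) with hh
    have hqp : 0 < q - p := by linarith
    have hθ0 : 0 ≤ θ := by
      apply div_nonneg (by linarith) hqp.le
    have hθ1 : θ ≤ 1 := by
      rw [hθ, div_le_one hqp]; linarith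
    -- pointwise convexity bound
    have hpt : ∀ a, Real.exp (t * (f a - μ)) ≤
        ((q - (f a - μ)) * Real.exp (t * p) + ((f a - μ) - p) * Real.exp (t * q)) / (q - p) := by
      intro a
      set x := f a - μ with hx
      have hxp : p ≤ x := by simp [hx, hp]; linarith [(hPM a).1]
      have hxq : x ≤ q := by simp [hx, hq]; linarith [(hPM a).2]
      have w1 : (0:ℝ) ≤ (q - x) / (q - p) := div_nonneg (by linarith) hqp.le
      have w2 : (0:ℝ) ≤ (x - p) / (q - p) := div_nonneg (by linarith) hqp.le
      have wsum : (q - x) / (q - p) + (x - p) / (q - p) = 1 := by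
        field_simp
        ring
      have hconv := convexOn_exp.2 (Set.mem_univ (t * p)) (Set.mem_univ (t * q)) w1 w2 wsum
      have harg : ((q - x) / (q - p)) • (t * p) + ((x - p) / (q - p)) • (t * q) = t * x := by
        simp only [smul_eq_mul]
        field_simp
        ring
      rw [harg] at hconv
      calc Real.exp (t * x) ≤ (q - x) / (q - p) * Real.exp (t * p)
            + (x - p) / (q - p) * Real.exp (t * q) := by simpa [smul_eq_mul] using hconv
        _ = ((q - x) * Real.exp (t * p) + (x - p) * Real.exp (t * q)) / (q - p) := by ring
    -- sum up
    have hsumbound : ∑ a, Real.exp (t * (f a - μ)) ≤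
        (Fintype.card β : ℝ) * ((q * Real.exp (t * p) - p * Real.exp (t * q)) / (q - p)) := by
      calc ∑ a, Real.exp (t * (f a - μ))
          ≤ ∑ a, ((q - (f a - μ)) * Real.exp (t * p) + ((f a - μ) - p) * Real.exp (t * q)) / (q - p) :=
            Finset.sum_le_sum (fun a _ => hpt a)
        _ = ((∑ a, (q - (f a - μ))) * Real.exp (t * p)
              + (∑ a, ((f a - μ) - p)) * Real.exp (t * q)) / (q - p) := by
            rw [← Finset.sum_div, Finset.sum_add_distrib, ← Finset.sum_mul, ← Finset.sum_mul]
        _ = (Fintype.card β : ℝ) * ((q * Real.exp (t * p) - p * Real.exp (t * q)) / (q - p)) := by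
            have e1 : ∑ a, (q - (f a - μ)) = (Fintype.card β : ℝ) * q := by
              rw [Finset.sum_sub_distrib, hsum0, Finset.sum_const]; simp [mul_comm]
            have e2 : ∑ a, ((f a - μ) - p) = -(Fintype.card β : ℝ) * p := by
              rw [Finset.sum_sub_distrib, hsum0, Finset.sum_const]; simp [mul_comm]
            rw [e1, e2]; ring
    -- identify with mcD formula
    have hid : (q * Real.exp (t * p) - p * Real.exp (t * q)) / (q - p)
        = mcD θ h * Real.exp (-(θ * h)) := by
      have hθh : θ * h = -(t * p) := by
        rw [hθ, hh]; field_simp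
      have htq : t * q = t * p + h := by rw [hh]; ring
      rw [mcD, hθh, neg_neg, htq, Real.exp_add]
      rw [hθ]
      field_simp
      ring
    have hcore := mcD_mul_exp_le hθ0 hθ1 h
    have hfin : (q * Real.exp (t * p) - p * Real.exp (t * q)) / (q - p)
        ≤ Real.exp (t ^ 2 * c ^ 2 / 8) := by
      rw [hid]
      refine hcore.trans (Real.exp_le_exp.mpr ?_)
      have h1 : h ^ 2 ≤ t ^ 2 * c ^ 2 := by
        have h2 : (q - p) ^ 2 ≤ c ^ 2 := by nlinarith
        calc h ^ 2 = t ^ 2 * (q - p) ^ 2 := by rw [hh]; ring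
          _ ≤ t ^ 2 * c ^ 2 := by nlinarith [sq_nonneg t]
      linarith [h1]
    rw [div_le_iff₀ hcard]
    calc ∑ a, Real.exp (t * (f a - μ))
        ≤ (Fintype.card β : ℝ) * ((q * Real.exp (t * p) - p * Real.exp (t * q)) / (q - p)) := hsumbound
      _ ≤ (Fintype.card β : ℝ) * Real.exp (t ^ 2 * c ^ 2 / 8) := by
          exact mul_le_mul_of_nonneg_left hfin hcard.le
      _ = Real.exp (t ^ 2 * c ^ 2 / 8) * (Fintype.card β : ℝ) := mul_comm _ _



def permLift {m : ℕ} (σ : Equiv.Perm (Fin m)) : Equiv.Perm (Fin (m + 1)) where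
  toFun := Fin.cons 0 (Fin.succ ∘ σ)
  invFun := Fin.cons 0 (Fin.succ ∘ σ.symm)
  left_inv j := by
    refine Fin.cases ?_ (fun i => ?_) j <;> simp [Function.comp]
  right_inv j := by
    refine Fin.cases ?_ (fun i => ?_) j <;> simp [Function.comp]

@[simp] lemma permLift_zero {m : ℕ} (σ : Equiv.Perm (Fin m)) : permLift σ 0 = 0 := rfl

@[simp] lemma permLift_succ {m : ℕ} (σ : Equiv.Perm (Fin m)) (i : Fin m) :
    permLift σ i.succ = (σ i).succ := by
  simp [permLift, Function.comp]

lemma cons_comp_permLift {α : Type*} {m : ℕ} (a : α) (u : Fin m → α) (σ : Equiv.Perm (Fin m)) :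
    (Fin.cons a u) ∘ (permLift σ) = Fin.cons a (u ∘ σ) := by
  funext j
  refine Fin.cases ?_ (fun i => ?_) j <;> simp [Function.comp]

lemma cons_inj {α : Type*} {m : ℕ} {a : α} {u : Fin m → α}
    (hu : Function.Injective u) (ha : ∀ i, u i ≠ a) :
    Function.Injective (Fin.cons a u) := by
  rw [Fin.cons_injective_iff]
  exact ⟨fun ⟨i, hi⟩ => (ha i) hi, hu⟩

section Decomp
variable {α : Type*} [Fintype α] {m : ℕ}

lemma tail_inj {m : ℕ} {J : Fin (m+1) → α} (hJ : Function.Injective J) :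
    Function.Injective (Fin.tail J) := fun i j h => Fin.succ_injective m (hJ h)

lemma sum_decompA (F : (Fin (m+1) → α) → ℝ) :
    ∑ J : {J : Fin (m+1) → α // Function.Injective J}, F J.1
      = ∑ a : α, ∑ R ∈ Finset.filter
          (fun R : {R : Fin m → α // Function.Injective R} => ∀ i, R.1 i ≠ a) univ,
          F (Fin.cons a R.1) := by
  classical
  have step1 : ∀ a : α, ∑ R ∈ Finset.filter
      (fun R : {R : Fin m → α // Function.Injective R} => ∀ i, R.1 i ≠ a) univ,
      F (Fin.cons a R.1)
      = ∑ R : {R : Fin m → α // Function.Injective R},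
          if ∀ i, R.1 i ≠ a then F (Fin.cons a R.1) else 0 :=
    fun a => Finset.sum_filter _ _
  simp only [step1]
  have hprod : ∑ x : α × {R : Fin m → α // Function.Injective R},
      (if ∀ i, x.2.1 i ≠ x.1 then F (Fin.cons x.1 x.2.1) else 0)
      = ∑ a : α, ∑ R : {R : Fin m → α // Function.Injective R},
        (if ∀ i, R.1 i ≠ a then F (Fin.cons a R.1) else 0) := Fintype.sum_prod_type _
  have hfilt : ∑ x ∈ Finset.filter
      (fun x : α × {R : Fin m → α // Function.Injective R} => ∀ i, x.2.1 i ≠ x.1) univ,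
      F (Fin.cons x.1 x.2.1)
      = ∑ x : α × {R : Fin m → α // Function.Injective R},
        (if ∀ i, x.2.1 i ≠ x.1 then F (Fin.cons x.1 x.2.1) else 0) := Finset.sum_filter _ _
  rw [← hprod, ← hfilt]
  refine Finset.sum_bij'
    (i := fun (J : {J : Fin (m+1) → α // Function.Injective J}) _ =>
      (J.1 0, ⟨Fin.tail J.1, tail_inj J.2⟩))
    (j := fun x hx => ⟨Fin.cons x.1 x.2.1, ?_⟩) ?_ ?_ ?_ ?_ ?_
  · -- injectivity of cons
    have hx' : ∀ i, x.2.1 i ≠ x.1 := (Finset.mem_filter.mp hx).2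
    exact cons_inj x.2.2 hx'
  · intro J _
    simp only [Finset.mem_filter, Finset.mem_univ, true_and]
    intro i h
    exact Fin.succ_ne_zero i (J.2 h)
  · intro x hx
    exact Finset.mem_univ _
  · intro J _
    exact Subtype.ext (Fin.cons_self_tail J.1)
  · intro x hx
    rfl
  · intro J _
    exact congrArg F (Fin.cons_self_tail J.1).symm
lemma sum_decompB (a : α) (G : (Fin m → α) → ℝ) :
    ∑ R ∈ Finset.filter
        (fun R : {R : Fin m → α // Function.Injective R} => ∀ i, R.1 i ≠ a) univ, G R.1
      = ∑ R' : {R : Fin m → {x : α // x ≠ a} // Function.Injective R},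
          G (fun i => (R'.1 i).1) := by
  classical
  refine Finset.sum_bij'
    (i := fun R hR => (⟨fun k => ⟨R.1 k, (Finset.mem_filter.mp hR).2 k⟩,
      fun k l h => R.2 (congrArg Subtype.val h)⟩ :
      {R : Fin m → {x : α // x ≠ a} // Function.Injective R}))
    (j := fun R' _ => ⟨fun k => (R'.1 k).1, fun k l h => R'.2 (Subtype.ext h)⟩)
    ?_ ?_ ?_ ?_ ?_
  · intro R hR
    exact Finset.mem_univ _
  · intro R' _
    simp only [Finset.mem_filter, Finset.mem_univ, true_and]
    exact fun i => (R'.1 i).2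
  · intro R hR
    rfl
  · intro R' _
    rfl
  · intro R hR
    rfl

lemma sum_decomp (F : (Fin (m+1) → α) → ℝ) :
    ∑ J : {J : Fin (m+1) → α // Function.Injective J}, F J.1
      = ∑ a : α, ∑ R : {R : Fin m → {x : α // x ≠ a} // Function.Injective R},
          F (Fin.cons a (fun i => (R.1 i).1)) := by
  rw [sum_decompA]
  exact Finset.sum_congr rfl (fun a _ => sum_decompB a (fun u => F (Fin.cons a u)))

lemma card_subinj (α : Type*) [Fintype α] (m : ℕ)
    {iS : Fintype {J : Fin m → α // Function.Injective J}} :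
    Fintype.card {J : Fin m → α // Function.Injective J}
      = (Fintype.card α).descFactorial m := by
  rw [Fintype.card_congr (Equiv.subtypeInjectiveEquivEmbedding (Fin m) α),
    Fintype.card_embedding_eq, Fintype.card_fin]

lemma card_ne (a : α) : Fintype.card {x : α // x ≠ a} = Fintype.card α - 1 := by
  classical
  simp [Fintype.card_subtype_compl]

end Decomp

section Swap
variable {α : Type*} {m : ℕ}

lemma swap_term [DecidableEq α] (Φ : (Fin (m+1) → α) → ℝ) (c : ℝ) (hc : 0 ≤ c)
    (hperm : ∀ (J : Fin (m+1) → α) (σ : Equiv.Perm (Fin (m+1))), Φ (J ∘ σ) = Φ J)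
    (hdiff : ∀ J J' : Fin (m+1) → α, Function.Injective J → Function.Injective J' →
      ∀ i : Fin (m+1), (∀ k, k ≠ i → J k = J' k) → |Φ J - Φ J'| ≤ c)
    (a b : α) (u : Fin m → α) (hu : Function.Injective u) (hua : ∀ i, u i ≠ a) :
    |Φ (Fin.cons a u) - Φ (Fin.cons b (fun i => Equiv.swap a b (u i)))| ≤ c := by
  by_cases hb : ∃ k, u k = b
  · obtain ⟨k, hk⟩ := hb
    have key : (Fin.cons b (fun i => Equiv.swap a b (u i))) ∘
        (Equiv.swap (0 : Fin (m+1)) k.succ) = Fin.cons a u := by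
      funext j
      refine Fin.cases ?_ (fun i => ?_) j
      · simp only [Function.comp_apply, Equiv.swap_apply_left, Fin.cons_succ, Fin.cons_zero]
        rw [hk, Equiv.swap_apply_right]
      · by_cases hik : i = k
        · subst hik
          simp only [Function.comp_apply, Equiv.swap_apply_right, Fin.cons_zero, Fin.cons_succ]
          exact hk.symm
        · have h1 : i.succ ≠ (0 : Fin (m+1)) := Fin.succ_ne_zero i
          have h2 : i.succ ≠ k.succ := fun h => hik (Fin.succ_injective m h)
          simp only [Function.comp_apply, Equiv.swap_apply_of_ne_of_ne h1 h2, Fin.cons_succ]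
          have hub : u i ≠ b := fun h => hik (hu (h.trans hk.symm))
          exact Equiv.swap_apply_of_ne_of_ne (hua i) hub
    have := hperm (Fin.cons b (fun i => Equiv.swap a b (u i))) (Equiv.swap 0 k.succ)
    rw [key] at this
    rw [this]
    simpa using hc
  · push_neg at hb
    have heq : (fun i => Equiv.swap a b (u i)) = u := by
      funext i
      exact Equiv.swap_apply_of_ne_of_ne (hua i) (hb i)
    rw [heq]
    refine hdiff _ _ (cons_inj hu hua) (cons_inj hu hb) 0 ?_
    intro k hk
    obtain ⟨i, rfl⟩ := Fin.exists_succ_eq.mpr hk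
    simp

def swapInjEquiv [DecidableEq α] (a b : α) :
    {R : Fin m → {x : α // x ≠ a} // Function.Injective R}
      ≃ {R : Fin m → {x : α // x ≠ b} // Function.Injective R} where
  toFun R := ⟨fun i => ⟨Equiv.swap a b (R.1 i).1, fun h => (R.1 i).2
      (Equiv.swap a b |>.injective (h.trans (Equiv.swap_apply_left a b).symm))⟩,
    fun i j h => R.2 (Subtype.ext ((Equiv.swap a b).injective (congrArg Subtype.val h)))⟩
  invFun R := ⟨fun i => ⟨Equiv.swap a b (R.1 i).1, fun h => (R.1 i).2
      (Equiv.swap a b |>.injective (h.trans (Equiv.swap_apply_right a b).symm))⟩,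
    fun i j h => R.2 (Subtype.ext ((Equiv.swap a b).injective (congrArg Subtype.val h)))⟩
  left_inv R := Subtype.ext (funext fun i => Subtype.ext (Equiv.swap_apply_self a b (R.1 i).1))
  right_inv R := Subtype.ext (funext fun i => Subtype.ext (Equiv.swap_apply_self a b (R.1 i).1))

end Swap



set_option maxHeartbeats 1000000 in
lemma mgf_le (m : ℕ) : ∀ (α : Type) [Fintype α], m ≤ Fintype.card α →
    ∀ (Φ : (Fin m → α) → ℝ) (c t : ℝ), 0 ≤ c →
    (∀ (J : Fin m → α) (σ : Equiv.Perm (Fin m)), Φ (J ∘ σ) = Φ J) →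
    (∀ J J' : Fin m → α, Function.Injective J → Function.Injective J' →
      ∀ i : Fin m, (∀ k, k ≠ i → J k = J' k) → |Φ J - Φ J'| ≤ c) →
    ∀ [iS : Fintype {J : Fin m → α // Function.Injective J}],
    (∑ J : {J : Fin m → α // Function.Injective J},
        Real.exp (t * (Φ J.1 - (∑ J' : {J : Fin m → α // Function.Injective J}, Φ J'.1) /
          (Fintype.card {J : Fin m → α // Function.Injective J}))))
      / (Fintype.card {J : Fin m → α // Function.Injective J})
      ≤ Real.exp (t ^ 2 * m * c ^ 2 / 8) := by
  induction m with
  | zero =>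
    intro α _ hcard Φ c t hc hperm hdiff iS
    haveI : Unique {J : Fin 0 → α // Function.Injective J} :=
      ⟨⟨⟨Fin.elim0, fun x => x.elim0⟩⟩, fun J => Subtype.ext (funext fun x => x.elim0)⟩
    rw [Fintype.card_unique, Fintype.sum_unique, Fintype.sum_unique]
    simp
  | succ m ih =>
    intro α _ hcard Φ c t hc hperm hdiff iS
    have hiS : iS = Subtype.fintype _ := Subsingleton.elim _ _
    subst hiS
    have hn1 : 1 ≤ Fintype.card α := le_trans (Nat.succ_le_succ (Nat.zero_le m)) hcard
    set N0 : ℕ := (Fintype.card α - 1).descFactorial m with hN0def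
    have hN0 : ∀ a : α, Fintype.card {R : Fin m → {x : α // x ≠ a} // Function.Injective R}
        = N0 := fun a => by rw [card_subinj, card_ne]
    have hN0pos : 0 < N0 := Nat.pos_of_ne_zero
      (fun h => absurd (Nat.descFactorial_eq_zero_iff_lt.mp h) (by omega))
    have hN1 : Fintype.card {J : Fin (m+1) → α // Function.Injective J}
        = Fintype.card α * N0 := by
      rw [card_subinj]
      obtain ⟨n', hn'⟩ : ∃ n', Fintype.card α = n' + 1 := ⟨Fintype.card α - 1, by omega⟩
      rw [hn', Nat.succ_descFactorial_succ, hN0def, hn']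
      simp
    set S : α → ℝ := fun a => ∑ R : {R : Fin m → {x : α // x ≠ a} // Function.Injective R},
      Φ (Fin.cons a (fun i => (R.1 i).1)) with hSdef
    set μ : ℝ := (∑ J' : {J : Fin (m+1) → α // Function.Injective J}, Φ J'.1) /
      (Fintype.card {J : Fin (m+1) → α // Function.Injective J}) with hμdef
    have hT : (∑ J' : {J : Fin (m+1) → α // Function.Injective J}, Φ J'.1) = ∑ a, S a :=
      sum_decomp Φ
    have hnαpos : (0:ℝ) < (Fintype.card α : ℝ) := by exact_mod_cast hn1
    have hnN0pos : (0:ℝ) < (N0 : ℝ) := by exact_mod_cast hN0pos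
    haveI : Nonempty α := Fintype.card_pos_iff.mp hn1
    have hμg : μ = (∑ b, S b / (N0:ℝ)) / (Fintype.card α) := by
      rw [hμdef, hT, hN1]
      push_cast
      rw [← Finset.sum_div, div_div]
      ring
    -- bounded differences of the conditional means
    have hgd : ∀ a b : α, S a / (N0:ℝ) - S b / (N0:ℝ) ≤ c := by
      intro a b
      have hSb : ∑ R : {R : Fin m → {x : α // x ≠ a} // Function.Injective R},
          Φ (Fin.cons b (fun i => Equiv.swap a b ((R.1 i).1))) = S b :=
        Equiv.sum_comp (swapInjEquiv a b)
          (fun Rb => Φ (Fin.cons b (fun i => ((Rb.1 i).1))))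
      have hterm : ∀ R : {R : Fin m → {x : α // x ≠ a} // Function.Injective R},
          Φ (Fin.cons a (fun i => (R.1 i).1))
            - Φ (Fin.cons b (fun i => Equiv.swap a b ((R.1 i).1))) ≤ c := by
        intro R
        have := swap_term Φ c hc hperm hdiff a b (fun i => (R.1 i).1)
          (fun i j h => R.2 (Subtype.ext h)) (fun i => (R.1 i).2)
        exact (abs_le.mp this).2
      have hsum : S a - S b ≤ (N0 : ℝ) * c := by
        rw [← hSb, hSdef]
        rw [← Finset.sum_sub_distrib]
        calc ∑ R : {R : Fin m → {x : α // x ≠ a} // Function.Injective R},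
              (Φ (Fin.cons a (fun i => (R.1 i).1))
                - Φ (Fin.cons b (fun i => Equiv.swap a b ((R.1 i).1))))
            ≤ ∑ _R : {R : Fin m → {x : α // x ≠ a} // Function.Injective R}, c :=
              Finset.sum_le_sum (fun R _ => hterm R)
          _ = (Fintype.card {R : Fin m → {x : α // x ≠ a} // Function.Injective R} : ℝ) * c := by
              rw [Finset.sum_const]; simp [mul_comm]
          _ = (N0 : ℝ) * c := by rw [hN0 a]
      rw [div_sub_div_same, div_le_iff₀ hnN0pos]
      linarith [hsum]
    -- inner bound from the induction hypothesis
    have hinner : ∀ a : α,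
        ∑ R : {R : Fin m → {x : α // x ≠ a} // Function.Injective R},
          Real.exp (t * (Φ (Fin.cons a (fun i => (R.1 i).1)) - S a / (N0:ℝ)))
          ≤ (N0 : ℝ) * Real.exp (t ^ 2 * m * c ^ 2 / 8) := by
      intro a
      set Φa : (Fin m → {x : α // x ≠ a}) → ℝ :=
        fun R => Φ (Fin.cons a (fun i => (R i).1)) with hΦa
      have hma : m ≤ Fintype.card {x : α // x ≠ a} := by rw [card_ne]; omega
      have hperma : ∀ (R : Fin m → {x : α // x ≠ a}) (σ : Equiv.Perm (Fin m)),
          Φa (R ∘ σ) = Φa R := by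
        intro R σ
        have h1 : Φa (R ∘ σ) = Φ ((Fin.cons a (fun i => (R i).1)) ∘ permLift σ) := by
          rw [cons_comp_permLift]
          rfl
        rw [h1, hperm]
      have hdiffa : ∀ R R' : Fin m → {x : α // x ≠ a}, Function.Injective R →
          Function.Injective R' → ∀ i : Fin m, (∀ k, k ≠ i → R k = R' k) →
          |Φa R - Φa R'| ≤ c := by
        intro R R' hR hR' i hk
        refine hdiff _ _ (cons_inj (fun x y h => hR (Subtype.ext h)) (fun x => (R x).2))
          (cons_inj (fun x y h => hR' (Subtype.ext h)) (fun x => (R' x).2)) i.succ ?_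
        intro k
        refine Fin.cases ?_ (fun j hj => ?_) k
        · intro _; simp
        · simp only [Fin.cons_succ]
          have hji : j ≠ i := fun h => hj (by rw [h])
          exact congrArg Subtype.val (hk j hji)
      have hIH := ih {x : α // x ≠ a} hma Φa c t hc hperma hdiffa
      rw [hN0 a] at hIH
      have e1 : (∑ R' : {R : Fin m → {x : α // x ≠ a} // Function.Injective R}, Φa R'.1)
          = S a := rfl
      rw [e1] at hIH
      have e2 : (∑ R : {R : Fin m → {x : α // x ≠ a} // Function.Injective R},
          Real.exp (t * (Φ (Fin.cons a (fun i => (R.1 i).1)) - S a / (N0:ℝ))))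
          = ∑ R : {R : Fin m → {x : α // x ≠ a} // Function.Injective R},
            Real.exp (t * (Φa R.1 - S a / (N0:ℝ))) := rfl
      rw [e2]
      rw [div_le_iff₀ hnN0pos] at hIH
      linarith [hIH]
    -- assemble
    rw [hN1, Nat.cast_mul]
    have hdec : (∑ J : {J : Fin (m+1) → α // Function.Injective J},
        Real.exp (t * (Φ J.1 - μ)))
        = ∑ a : α, ∑ R : {R : Fin m → {x : α // x ≠ a} // Function.Injective R},
            Real.exp (t * (Φ (Fin.cons a (fun i => (R.1 i).1)) - μ)) :=
      sum_decomp (fun u => Real.exp (t * (Φ u - μ)))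
    rw [hdec]
    have hsplit : ∀ a : α, ∀ R : {R : Fin m → {x : α // x ≠ a} // Function.Injective R},
        Real.exp (t * (Φ (Fin.cons a (fun i => (R.1 i).1)) - μ))
          = Real.exp (t * (S a / (N0:ℝ) - μ)) *
            Real.exp (t * (Φ (Fin.cons a (fun i => (R.1 i).1)) - S a / (N0:ℝ))) := by
      intro a R
      rw [← Real.exp_add]
      congr 1
      ring
    have hstep1 : ∑ a : α, ∑ R : {R : Fin m → {x : α // x ≠ a} // Function.Injective R},
        Real.exp (t * (Φ (Fin.cons a (fun i => (R.1 i).1)) - μ))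
        ≤ ∑ a : α, Real.exp (t * (S a / (N0:ℝ) - μ)) *
            ((N0 : ℝ) * Real.exp (t ^ 2 * m * c ^ 2 / 8)) := by
      refine Finset.sum_le_sum (fun a _ => ?_)
      calc ∑ R : {R : Fin m → {x : α // x ≠ a} // Function.Injective R},
            Real.exp (t * (Φ (Fin.cons a (fun i => (R.1 i).1)) - μ))
          = Real.exp (t * (S a / (N0:ℝ) - μ)) *
              ∑ R : {R : Fin m → {x : α // x ≠ a} // Function.Injective R},
                Real.exp (t * (Φ (Fin.cons a (fun i => (R.1 i).1)) - S a / (N0:ℝ))) := by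
            rw [Finset.mul_sum]
            exact Finset.sum_congr rfl (fun R _ => hsplit a R)
        _ ≤ Real.exp (t * (S a / (N0:ℝ) - μ)) *
              ((N0 : ℝ) * Real.exp (t ^ 2 * m * c ^ 2 / 8)) :=
            mul_le_mul_of_nonneg_left (hinner a) (Real.exp_pos _).le
    have hhoeff : (∑ a : α, Real.exp (t * (S a / (N0:ℝ)
          - (∑ b : α, S b / (N0:ℝ)) / (Fintype.card α : ℝ)))) / (Fintype.card α : ℝ)
        ≤ Real.exp (t ^ 2 * c ^ 2 / 8) :=
      finite_hoeffding (fun a : α => S a / (N0:ℝ)) c t hc (fun a b => hgd a b)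
    rw [← hμg] at hhoeff
    -- final algebra
    have hfinal : (∑ a : α, Real.exp (t * (S a / (N0:ℝ) - μ)) *
          ((N0 : ℝ) * Real.exp (t ^ 2 * m * c ^ 2 / 8)))
          / ((Fintype.card α : ℝ) * (N0 : ℝ))
        = Real.exp (t ^ 2 * m * c ^ 2 / 8) *
          ((∑ a : α, Real.exp (t * (S a / (N0:ℝ) - μ))) / (Fintype.card α : ℝ)) := by
      rw [← Finset.sum_mul]
      field_simp
    calc (∑ a : α, ∑ R : {R : Fin m → {x : α // x ≠ a} // Function.Injective R},
            Real.exp (t * (Φ (Fin.cons a (fun i => (R.1 i).1)) - μ)))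
          / ((Fintype.card α : ℝ) * (N0 : ℝ))
        ≤ (∑ a : α, Real.exp (t * (S a / (N0:ℝ) - μ)) *
            ((N0 : ℝ) * Real.exp (t ^ 2 * m * c ^ 2 / 8)))
          / ((Fintype.card α : ℝ) * (N0 : ℝ)) := by
          have hpos : (0:ℝ) ≤ (Fintype.card α : ℝ) * (N0 : ℝ) := by positivity
          exact div_le_div_of_nonneg_right hstep1 hpos
      _ = Real.exp (t ^ 2 * m * c ^ 2 / 8) *
            ((∑ a : α, Real.exp (t * (S a / (N0:ℝ) - μ))) / (Fintype.card α : ℝ)) := hfinal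
      _ ≤ Real.exp (t ^ 2 * m * c ^ 2 / 8) * Real.exp (t ^ 2 * c ^ 2 / 8) :=
          mul_le_mul_of_nonneg_left hhoeff (Real.exp_pos _).le
      _ = Real.exp (t ^ 2 * (m + 1 : ℕ) * c ^ 2 / 8) := by
          rw [← Real.exp_add]
          congr 1
          push_cast
          ring

end McDiarmidAux

open Classical Finset Real in
/-- Generalized McDiarmid inequality for sampling without replacement:
if `Φ : [n]^m → ℝ≥0` is permutation-invariant with bounded differences `c` under
single-coordinate replacement, and `J` is a uniform injective sequence of `m`
indices from `[n]`, then `Pr[Φ(J) - E[Φ(J)] > ε] ≤ exp(-2ε²/(m c²))`. -/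
theorem generalized_mcdiarmid (n m : ℕ) (hm : m ≤ n) (hn : 0 < n)
    (Φ : (Fin m → Fin n) → ℝ) (c ε : ℝ) (hε : 0 < ε)
    (hΦ0 : ∀ J, 0 ≤ Φ J)
    (hperm : ∀ (J : Fin m → Fin n) (σ : Equiv.Perm (Fin m)), Φ (J ∘ σ) = Φ J)
    (hdiff : ∀ J J' : Fin m → Fin n, Function.Injective J → Function.Injective J' →
      ∀ i : Fin m, (∀ k, k ≠ i → J k = J' k) → |Φ J - Φ J'| ≤ c) :
    ((Finset.univ.filter (fun J : {J : Fin m → Fin n // Function.Injective J} =>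
        Φ J.1 - (∑ J' : {J : Fin m → Fin n // Function.Injective J}, Φ J'.1) /
          (Fintype.card {J : Fin m → Fin n // Function.Injective J}) > ε)).card : ℝ) /
      (Fintype.card {J : Fin m → Fin n // Function.Injective J}) ≤
    Real.exp (-2 * ε ^ 2 / (m * c ^ 2)) := by
  have hNpos : 0 < Fintype.card {J : Fin m → Fin n // Function.Injective J} := by
    rw [card_subinj, Fintype.card_fin]
    exact Nat.pos_of_ne_zero
      (fun h => absurd (Nat.descFactorial_eq_zero_iff_lt.mp h) (by omega))
  have hNcast : (0:ℝ) < (Fintype.card {J : Fin m → Fin n // Function.Injective J} : ℝ) := by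
    exact_mod_cast hNpos
  have hP1 : ((Finset.univ.filter (fun J : {J : Fin m → Fin n // Function.Injective J} =>
        Φ J.1 - (∑ J' : {J : Fin m → Fin n // Function.Injective J}, Φ J'.1) /
          (Fintype.card {J : Fin m → Fin n // Function.Injective J}) > ε)).card : ℝ) /
      (Fintype.card {J : Fin m → Fin n // Function.Injective J}) ≤ 1 := by
    rw [div_le_one hNcast]
    exact_mod_cast (Finset.card_filter_le _ _).trans_eq (Finset.card_univ)
  by_cases hA : (m:ℝ) * c ^ 2 = 0
  · rw [hA, div_zero, Real.exp_zero]
    exact hP1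
  · -- main case
    have hm0 : m ≠ 0 := by
      intro h
      subst h
      simp at hA
    have hc0 : 0 ≤ c := by
      have hinj : Function.Injective (fun i : Fin m => Fin.castLE hm i) :=
        fun i j h => Fin.castLE_injective hm h
      have := hdiff _ _ hinj hinj ⟨0, Nat.pos_of_ne_zero hm0⟩ (fun k _ => rfl)
      simpa using this
    have hc : 0 < c := lt_of_le_of_ne hc0 (fun h => hA (by rw [← h]; ring))
    have hApos : 0 < (m:ℝ) * c ^ 2 := by
      have : 0 < (m:ℝ) := by exact_mod_cast Nat.pos_of_ne_zero hm0
      positivity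
    set A : ℝ := (m:ℝ) * c ^ 2 with hAdef
    set t : ℝ := 4 * ε / A with htdef
    have ht : 0 < t := by positivity
    set μ : ℝ := (∑ J' : {J : Fin m → Fin n // Function.Injective J}, Φ J'.1) /
      (Fintype.card {J : Fin m → Fin n // Function.Injective J}) with hμdef
    have hmgf := mgf_le m (Fin n) (by rw [Fintype.card_fin]; exact hm) Φ c t hc0 hperm hdiff
    rw [← hμdef] at hmgf
    rw [div_le_iff₀ hNcast] at hmgf
    set q : ℕ := (Finset.univ.filter (fun J : {J : Fin m → Fin n // Function.Injective J} =>
        Φ J.1 - μ > ε)).card with hqdef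
    have hq : (q:ℝ) * Real.exp (t * ε)
        ≤ (Fintype.card {J : Fin m → Fin n // Function.Injective J} : ℝ) *
          Real.exp (t ^ 2 * m * c ^ 2 / 8) := by
      calc (q:ℝ) * Real.exp (t * ε)
          = ∑ _J ∈ Finset.univ.filter (fun J : {J : Fin m → Fin n // Function.Injective J} =>
              Φ J.1 - μ > ε), Real.exp (t * ε) := by
            rw [Finset.sum_const, nsmul_eq_mul, hqdef]
        _ ≤ ∑ J ∈ Finset.univ.filter (fun J : {J : Fin m → Fin n // Function.Injective J} =>
              Φ J.1 - μ > ε), Real.exp (t * (Φ J.1 - μ)) := by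
            refine Finset.sum_le_sum (fun J hJ => ?_)
            have hJ' := (Finset.mem_filter.mp hJ).2
            exact Real.exp_le_exp.mpr (mul_le_mul_of_nonneg_left (le_of_lt hJ') ht.le)
        _ ≤ ∑ J : {J : Fin m → Fin n // Function.Injective J}, Real.exp (t * (Φ J.1 - μ)) :=
            Finset.sum_le_sum_of_subset_of_nonneg (Finset.filter_subset _ _)
              (fun J _ _ => (Real.exp_pos _).le)
        _ ≤ (Fintype.card {J : Fin m → Fin n // Function.Injective J} : ℝ) *
              Real.exp (t ^ 2 * m * c ^ 2 / 8) := by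
            rw [mul_comm]
            exact hmgf
    have hexp : t ^ 2 * (m:ℝ) * c ^ 2 / 8 - t * ε = -2 * ε ^ 2 / A := by
      rw [htdef, hAdef]
      field_simp
      ring
    rw [div_le_iff₀ hNcast]
    have step : (q:ℝ) ≤ (Fintype.card {J : Fin m → Fin n // Function.Injective J} : ℝ) *
        Real.exp (t ^ 2 * m * c ^ 2 / 8 - t * ε) := by
      rw [Real.exp_sub, ← mul_div_assoc, le_div_iff₀ (Real.exp_pos _)]
      exact hq
    rw [hexp] at step
    calc (q:ℝ) ≤ _ := step
      _ = Real.exp (-2 * ε ^ 2 / A) *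
          (Fintype.card {J : Fin m → Fin n // Function.Injective J} : ℝ) := mul_comm _ _
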